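/- The AdditionOracle for the N-digit addition function is valid: given a valuation v of 2N digit variables (each in [0,9] or unknown) and a target r with base-10 digits r₀…r_N, if the oracle (which computes the sum digit by digit from right to left, returning ⊥ upon encountering an unknown digit, 0 upon a digit mismatch, and comparing the final carry with r₀) returns 0 then every total extension of v has a sum different from r, and if it returns 1 then v is total and its sum equals r. -/

import Mathlib

open Finset

/-- The sum of the two `N`-digit numbers encoded by a total valuation
`x : Fin (2*N) → Fin 10` (first summand: indices `0..N-1`, most significant first;
second summand: indices `N..2N-1`). -/
def additionResult (N : ℕ) (x : Fin (2 * N) → Fin 10) : ℕ :=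
  (∑ i : Fin N, (x ⟨i.val, by have h := i.isLt; omega⟩ : ℕ) * 10 ^ (N - 1 - i.val)) +
  (∑ i : Fin N, (x ⟨N + i.val, by have h := i.isLt; omega⟩ : ℕ) * 10 ^ (N - 1 - i.val))

/-- The loop of the AdditionOracle: processes digit positions from right (position `N`)
to left (position `1`), carrying; returns `none` on an unknown digit, `some false` on a
digit mismatch with the target `r`, and finally compares the carry with the leading
digit `r₀ = r / 10^N`. `addOracleAux N vv r i carry` processes positions `i, i-1, …, 1`. -/
def addOracleAux (N : ℕ) (vv : ℕ → Option ℕ) (r : ℕ) : ℕ → ℕ → Option Bool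
  | 0, carry => some (decide (carry = r / 10 ^ N))
  | (i + 1), carry =>
    match vv i, vv (N + i) with
    | some a, some b =>
        let d := carry + a + b
        if d % 10 = (r / 10 ^ (N - (i + 1))) % 10 then addOracleAux N vv r i (d / 10)
        else some false
    | _, _ => none

/-- The AdditionOracle on a valuation of the `2N` digit variables. -/
def addOracle (N : ℕ) (v : Fin (2 * N) → Option (Fin 10)) (r : ℕ) : Option Bool :=
  addOracleAux N
    (fun i => if h : i < 2 * N then (v ⟨i, h⟩).map (fun d => (d : ℕ)) else none) r N 0

/-- Auxiliary: the sum of the pair of digits at position `j`. -/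
def pairSum (N : ℕ) (x : Fin (2 * N) → Fin 10) (j : ℕ) : ℕ :=
  if h : j < N then (x ⟨j, by omega⟩ : ℕ) + (x ⟨N + j, by omega⟩ : ℕ) else 0

lemma additionResult_eq (N : ℕ) (x : Fin (2 * N) → Fin 10) :
    additionResult N x = ∑ j ∈ Finset.range N, pairSum N x j * 10 ^ (N - 1 - j) := by
  unfold additionResult
  rw [← Finset.sum_add_distrib,
    ← Fin.sum_univ_eq_sum_range (fun j => pairSum N x j * 10 ^ (N - 1 - j)) N]
  apply Finset.sum_congr rfl
  intro i _
  have hi : (i : ℕ) < N := i.isLt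
  simp only [pairSum, dif_pos hi]
  ring

lemma aux_main (N : ℕ) (v : Fin (2 * N) → Option (Fin 10)) (r : ℕ) :
    ∀ i, ∀ hiN0 : i ≤ N, ∀ c b,
      addOracleAux N
        (fun j => if h : j < 2 * N then (v ⟨j, h⟩).map (fun d => (d : ℕ)) else none) r i c
        = some b →
      ((b = true → ∀ j, (hj : j < i) →
          (v ⟨j, by omega⟩).isSome ∧ (v ⟨N + j, by omega⟩).isSome) ∧
      ∀ x : Fin (2 * N) → Fin 10, (∀ k d, v k = some d → x k = d) →
        (b = true ↔
          c + ∑ j ∈ Finset.range i, pairSum N x j * 10 ^ (i - 1 - j) = r / 10 ^ (N - i))) := by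
  intro i
  induction i with
  | zero =>
    intro _ c b h
    simp only [addOracleAux, Option.some.injEq] at h
    refine ⟨fun _ j hj => absurd hj (Nat.not_lt_zero j), fun x hx => ?_⟩
    subst h
    simp [decide_eq_true_iff]
  | succ i ih =>
    intro hi c b h
    have hiN : i < N := hi
    have h2N : i < 2 * N := by omega
    have hN2N : N + i < 2 * N := by omega
    unfold addOracleAux at h
    simp only [dif_pos h2N, dif_pos hN2N] at h
    rcases hva : v ⟨i, h2N⟩ with _ | a
    · rw [hva] at h; simp at h
    rcases hvb : v ⟨N + i, hN2N⟩ with _ | bb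
    · rw [hva, hvb] at h
      simp at h
    rw [hva, hvb] at h
    replace h : (if (c + (a : ℕ) + (bb : ℕ)) % 10 = r / 10 ^ (N - (i + 1)) % 10 then
        addOracleAux N
          (fun j => if h : j < 2 * N then (v ⟨j, h⟩).map (fun d => (d : ℕ)) else none) r i
          ((c + (a : ℕ) + (bb : ℕ)) / 10)
      else some false) = some b := h
    set d := c + (a : ℕ) + (bb : ℕ) with hd
    by_cases hdig : d % 10 = r / 10 ^ (N - (i + 1)) % 10
    · rw [if_pos hdig] at h
      obtain ⟨hdef, hiff⟩ := ih (by omega) (d / 10) b h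
      constructor
      · intro hb j hj
        rcases Nat.lt_or_ge j i with hji | hji
        · exact hdef hb j hji
        · have hji' : j = i := by omega
          subst hji'
          constructor
          · rw [show (⟨j, by omega⟩ : Fin (2 * N)) = ⟨j, h2N⟩ from rfl, hva]; rfl
          · rw [show (⟨N + j, by omega⟩ : Fin (2 * N)) = ⟨N + j, hN2N⟩ from rfl, hvb]; rfl
      · intro x hx
        have hxa : (x ⟨i, h2N⟩ : ℕ) = (a : ℕ) := by rw [hx _ _ hva]
        have hxb : (x ⟨N + i, hN2N⟩ : ℕ) = (bb : ℕ) := by rw [hx _ _ hvb]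
        have hps : pairSum N x i = (a : ℕ) + (bb : ℕ) := by
          simp only [pairSum, dif_pos hiN]
          rw [show (⟨i, by omega⟩ : Fin (2 * N)) = ⟨i, h2N⟩ from rfl,
            show (⟨N + i, by omega⟩ : Fin (2 * N)) = ⟨N + i, hN2N⟩ from rfl, hxa, hxb]
        rw [hiff x hx]
        rw [Finset.sum_range_succ]
        have hsum : ∑ j ∈ Finset.range i, pairSum N x j * 10 ^ (i + 1 - 1 - j)
            = 10 * ∑ j ∈ Finset.range i, pairSum N x j * 10 ^ (i - 1 - j) := by
          rw [Finset.mul_sum]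
          apply Finset.sum_congr rfl
          intro j hj
          have hji : j < i := Finset.mem_range.mp hj
          rw [show i + 1 - 1 - j = (i - 1 - j) + 1 by omega, pow_succ]
          ring
        rw [hsum, hps]
        have hexp : i + 1 - 1 - i = 0 := by omega
        rw [hexp, pow_zero, mul_one]
        have hRdiv : r / 10 ^ (N - (i + 1)) / 10 = r / 10 ^ (N - i) := by
          rw [Nat.div_div_eq_div_mul, ← pow_succ, show N - (i + 1) + 1 = N - i by omega]
        set T := ∑ j ∈ Finset.range i, pairSum N x j * 10 ^ (i - 1 - j)
        set R := r / 10 ^ (N - (i + 1)) with hR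
        rw [← hRdiv]
        constructor
        · intro he; omega
        · intro he; omega
    · rw [if_neg hdig] at h
      have hb : b = false := by
        simpa using h.symm
      subst hb
      refine ⟨fun hb => by simp at hb, fun x hx => ?_⟩
      have hxa : (x ⟨i, h2N⟩ : ℕ) = (a : ℕ) := by rw [hx _ _ hva]
      have hxb : (x ⟨N + i, hN2N⟩ : ℕ) = (bb : ℕ) := by rw [hx _ _ hvb]
      have hps : pairSum N x i = (a : ℕ) + (bb : ℕ) := by
        simp only [pairSum, dif_pos hiN]
        rw [show (⟨i, by omega⟩ : Fin (2 * N)) = ⟨i, h2N⟩ from rfl,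
          show (⟨N + i, by omega⟩ : Fin (2 * N)) = ⟨N + i, hN2N⟩ from rfl, hxa, hxb]
      simp only [Bool.false_eq_true, false_iff]
      rw [Finset.sum_range_succ]
      have hsum : ∑ j ∈ Finset.range i, pairSum N x j * 10 ^ (i + 1 - 1 - j)
          = 10 * ∑ j ∈ Finset.range i, pairSum N x j * 10 ^ (i - 1 - j) := by
        rw [Finset.mul_sum]
        apply Finset.sum_congr rfl
        intro j hj
        have hji : j < i := Finset.mem_range.mp hj
        rw [show i + 1 - 1 - j = (i - 1 - j) + 1 by omega, pow_succ]
        ring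
      rw [hsum, hps]
      have hexp : i + 1 - 1 - i = 0 := by omega
      rw [hexp, pow_zero, mul_one]
      set T := ∑ j ∈ Finset.range i, pairSum N x j * 10 ^ (i - 1 - j)
      set R := r / 10 ^ (N - (i + 1)) with hR
      intro he
      omega

/-- validity of the AdditionOracle: if it returns 0 then every total
extension of `v` has sum different from `r`; if it returns 1 then `v` is total and
every total extension (i.e. `v` itself) has sum equal to `r`. -/
theorem stmt13 (N : ℕ) (v : Fin (2 * N) → Option (Fin 10)) (r : ℕ)
    (hr : r < 2 * 10 ^ N) :
    (addOracle N v r = some false →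
      ∀ x : Fin (2 * N) → Fin 10, (∀ k d, v k = some d → x k = d) →
        additionResult N x ≠ r) ∧
    (addOracle N v r = some true →
      (∀ k, (v k).isSome) ∧
      ∀ x : Fin (2 * N) → Fin 10, (∀ k d, v k = some d → x k = d) →
        additionResult N x = r) := by
  constructor
  · intro h x hx
    unfold addOracle at h
    have H := (aux_main N v r N le_rfl 0 false h).2 x hx
    simp only [Nat.sub_self, pow_zero, Nat.div_one, zero_add, Bool.false_eq_true,
      false_iff] at H
    rw [additionResult_eq]
    exact H
  · intro h
    unfold addOracle at h
    have H := aux_main N v r N le_rfl 0 true h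
    constructor
    · intro k
      have hdef := H.1 rfl
      rcases Nat.lt_or_ge k.val N with hk | hk
      · have hk2 := (hdef k.val hk).1
        have : (⟨k.val, by omega⟩ : Fin (2 * N)) = k := rfl
        rwa [this] at hk2
      · have hk2 := (hdef (k.val - N) (by omega)).2
        have : (⟨N + (k.val - N), by omega⟩ : Fin (2 * N)) = k := by
          ext; simp; omega
        rwa [this] at hk2
    · intro x hx
      have := (H.2 x hx).mp rfl
      simp only [Nat.sub_self, pow_zero, Nat.div_one, zero_add] at this
      rw [additionResult_eq]
      exact this
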